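/- Fix d > 0 and θ ∈ (−π/2, π/2). Define γ_SW(M, r) = (1/(d*r*cos θ)) * (arctan (M*d/(2*r*cos θ) − tan θ) + arctan (M*d/(2*r*cos θ) + tan θ)) and γ_UPW(M, r) = M/r². Then for fixed M, γ_SW(M, r)/γ_UPW(M, r) → 1 as r → ∞. -/

import Mathlib

open Real Filter

theorem snr_ratio_tendsto_one (d θ M : ℝ) (hd : d > 0)
    (hθ : θ ∈ Set.Ioo (-(π / 2)) (π / 2)) (hM : M > 0) :
    Tendsto (fun r : ℝ =>
        ((1 / (d * r * cos θ)) * (arctan (M * d / (2 * r * cos θ) - tan θ) +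
          arctan (M * d / (2 * r * cos θ) + tan θ))) / (M / r ^ 2))
      atTop (nhds 1) := by
  have hc : 0 < cos θ := Real.cos_pos_of_mem_Ioo hθ
  set f : ℝ → ℝ := fun x => arctan (x - tan θ) + arctan (x + tan θ) with hf
  have hf0 : f 0 = 0 := by
    simp [hf, arctan_neg, Real.arctan_tan hθ.1 hθ.2]
  -- derivative of f at 0
  have hsec : 1 + tan θ ^ 2 = 1 / cos θ ^ 2 := by
    rw [Real.tan_eq_sin_div_cos]
    field_simp
    linarith [sin_sq_add_cos_sq θ]

  have hder : HasDerivAt f (2 * cos θ ^ 2) 0 := by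
    have h1 : HasDerivAt (fun x : ℝ => arctan (x - tan θ))
        (1 / (1 + (0 - tan θ) ^ 2)) 0 := by
      simpa using (((hasDerivAt_id (0:ℝ)).sub_const (tan θ)).arctan)
    have h2 : HasDerivAt (fun x : ℝ => arctan (x + tan θ))
        (1 / (1 + (0 + tan θ) ^ 2)) 0 := by
      simpa using (((hasDerivAt_id (0:ℝ)).add_const (tan θ)).arctan)
    have := h1.add h2
    refine this.congr_deriv ?_
    simp only [zero_sub, zero_add, neg_sq]
    rw [hsec]
    field_simp
    ring
  have hslope : Tendsto (fun x : ℝ => f x / x) (nhdsWithin 0 {(0:ℝ)}ᶜ)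
      (nhds (2 * cos θ ^ 2)) := by
    have := hasDerivAt_iff_tendsto_slope.mp hder
    refine this.congr fun x => ?_
    simp [slope_def_field, hf0, div_eq_mul_inv, mul_comm]
  have hc2 : (2 : ℝ) * cos θ ^ 2 ≠ 0 := by positivity
  have hg : Tendsto (fun x : ℝ => f x / x / (2 * cos θ ^ 2))
      (nhdsWithin 0 {(0:ℝ)}ᶜ) (nhds 1) := by
    have := hslope.div_const (2 * cos θ ^ 2)
    rwa [div_self hc2] at this
  -- composition
  have hx : Tendsto (fun r : ℝ => M * d / (2 * r * cos θ)) atTop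
      (nhdsWithin 0 {(0:ℝ)}ᶜ) := by
    rw [tendsto_nhdsWithin_iff]
    constructor
    · have h := tendsto_inv_atTop_zero (𝕜 := ℝ) |>.const_mul (M * d / (2 * cos θ))
      rw [mul_zero] at h
      refine h.congr fun r => ?_
      simp [div_eq_mul_inv, mul_inv]
      ring
    · filter_upwards [eventually_gt_atTop (0:ℝ)] with r hr
      have : 0 < M * d / (2 * r * cos θ) := by positivity
      exact ne_of_gt this
  have key := hg.comp hx
  refine key.congr' ?_
  filter_upwards [eventually_gt_atTop (0:ℝ)] with r hr
  have hx0 : M * d / (2 * r * cos θ) > 0 := by positivity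
  show f (M * d / (2 * r * cos θ)) / (M * d / (2 * r * cos θ)) / (2 * cos θ ^ 2)
      = (1 / (d * r * cos θ)) * f (M * d / (2 * r * cos θ)) / (M / r ^ 2)
  field_simp
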